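/- Let Λ be the rank-2 lattice with Gram matrix [[2a, 2m],[2m, 2b]] where a ≥ 0, m ≥ 0, b < 0 are integers with m^2 > ab and 2 ∤ a. Let Σ_6 be the rank-7 lattice with generators A, E1, ..., E6 and diagonal Gram matrix diag(2, -2, -2, -2, -2, -2, -2). Write -b = m1^2 + ... + m5^2 with gcd(m1,...,m5) = 1. Then the map σ sending F1 ↦ ((a+1)/2)(A - E6) + E6 and F2 ↦ m(A - E6) - (m1 E1 + ... + m5 E5) is a primitive embedding of lattices, i.e., it is injective, preserves the bilinear form, and has torsion-free cokernel. -/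

import Mathlib

/-- The bilinear form of the lattice `Σ₆ = ⟨2⟩ ⊕ ⟨-2⟩⁶` with basis `A, E1, ..., E6`. -/
def formSigma6 (u v : Fin 7 → ℤ) : ℤ :=
  2 * u 0 * v 0 -
    2 * (u 1 * v 1 + u 2 * v 2 + u 3 * v 3 + u 4 * v 4 + u 5 * v 5 + u 6 * v 6)

/-- The bilinear form of the rank-2 lattice with Gram matrix `[[2a, 2m],[2m, 2b]]`. -/
def formLambda (a m b : ℤ) (x y : Fin 2 → ℤ) : ℤ :=
  2 * a * x 0 * y 0 + 2 * m * (x 0 * y 1 + x 1 * y 0) + 2 * b * x 1 * y 1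

lemma aux_gcd_mul_dvd (n x : ℤ) (k l : ℕ) (h1 : n ∣ (k:ℤ) * x) (h2 : n ∣ (l:ℤ) * x) :
    n ∣ (Nat.gcd k l : ℤ) * x := by
  have h := Int.dvd_coe_gcd h1 h2
  rw [Int.gcd_mul_right] at h
  simp only [Int.gcd_natCast_natCast] at h
  push_cast at h
  rcases abs_cases x with ⟨hx, _⟩ | ⟨hx, _⟩
  · rwa [hx] at h
  · rw [hx, mul_neg] at h; exact dvd_neg.mp h

/-- Case `2 ∤ a`: the map `F1 ↦ ((a+1)/2)(A - E6) + E6`,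
`F2 ↦ m(A - E6) - (m1 E1 + ... + m5 E5)` is a primitive embedding of the lattice
`[[2a,2m],[2m,2b]]` into `Σ₆`. -/
theorem stmt_5 (a m b : ℤ) (ha : 0 ≤ a) (hm : 0 ≤ m) (hb : b < 0)
    (hind : a * b < m ^ 2) (hodd : ¬ (2 ∣ a))
    (m1 m2 m3 m4 m5 : ℕ)
    (hsum : -b = (m1 : ℤ) ^ 2 + (m2 : ℤ) ^ 2 + (m3 : ℤ) ^ 2 + (m4 : ℤ) ^ 2 + (m5 : ℤ) ^ 2)
    (hgcd : Nat.gcd m1 (Nat.gcd m2 (Nat.gcd m3 (Nat.gcd m4 m5))) = 1)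
    (σ : (Fin 2 → ℤ) → (Fin 7 → ℤ))
    (hσ : ∀ x, σ x =
      x 0 • ![(a + 1) / 2, 0, 0, 0, 0, 0, 1 - (a + 1) / 2] +
      x 1 • ![m, -(m1 : ℤ), -(m2 : ℤ), -(m3 : ℤ), -(m4 : ℤ), -(m5 : ℤ), -m]) :
    (∀ x y, formSigma6 (σ x) (σ y) = formLambda a m b x y) ∧
    Function.Injective σ ∧
    (∀ (y : Fin 7 → ℤ) (n : ℤ), n ≠ 0 → n • y ∈ Set.range σ → y ∈ Set.range σ) := by
  obtain ⟨c, hc⟩ : ∃ c : ℤ, a = 2 * c - 1 := ⟨(a + 1) / 2, by omega⟩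
  subst hc
  have hdiv : (2 * c - 1 + 1) / 2 = c := by omega
  have hcpos : 1 ≤ c := by omega
  have e0 : ∀ x, σ x 0 = x 0 * c + x 1 * m := fun x => by rw [hσ, hdiv]; rfl
  have e1 : ∀ x, σ x 1 = -(x 1 * m1) := fun x => by
    rw [hσ]; show x 0 * 0 + x 1 * (-(m1 : ℤ)) = _; ring
  have e2 : ∀ x, σ x 2 = -(x 1 * m2) := fun x => by
    rw [hσ]; show x 0 * 0 + x 1 * (-(m2 : ℤ)) = _; ring
  have e3 : ∀ x, σ x 3 = -(x 1 * m3) := fun x => by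
    rw [hσ]; show x 0 * 0 + x 1 * (-(m3 : ℤ)) = _; ring
  have e4 : ∀ x, σ x 4 = -(x 1 * m4) := fun x => by
    rw [hσ]; show x 0 * 0 + x 1 * (-(m4 : ℤ)) = _; ring
  have e5 : ∀ x, σ x 5 = -(x 1 * m5) := fun x => by
    rw [hσ]; show x 0 * 0 + x 1 * (-(m5 : ℤ)) = _; ring
  have e6 : ∀ x, σ x 6 = x 0 * (1 - c) - x 1 * m := fun x => by
    rw [hσ, hdiv]; show x 0 * (1 - c) + x 1 * (-m) = _; ring
  refine ⟨?_, ?_, ?_⟩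
  · intro x y
    rw [formSigma6, formLambda, e0, e0, e1, e1, e2, e2, e3, e3, e4, e4, e5, e5, e6, e6]
    linear_combination (2 * x 1 * y 1) * hsum
  · intro x y h
    have h0 := congrFun h 0; rw [e0, e0] at h0
    have h1 := congrFun h 1; rw [e1, e1] at h1
    have h2 := congrFun h 2; rw [e2, e2] at h2
    have h3 := congrFun h 3; rw [e3, e3] at h3
    have h4 := congrFun h 4; rw [e4, e4] at h4
    have h5 := congrFun h 5; rw [e5, e5] at h5
    have h6 := congrFun h 6; rw [e6, e6] at h6
    have hmi : m1 ≠ 0 ∨ m2 ≠ 0 ∨ m3 ≠ 0 ∨ m4 ≠ 0 ∨ m5 ≠ 0 := by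
      by_contra hall
      push_neg at hall
      obtain ⟨z1, z2, z3, z4, z5⟩ := hall
      rw [z1, z2, z3, z4, z5] at hgcd
      simp at hgcd
    have hx1 : x 1 = y 1 := by
      rcases hmi with hz | hz | hz | hz | hz
      · exact mul_right_cancel₀ (show ((m1:ℤ)) ≠ 0 by exact_mod_cast hz)
          (show x 1 * (m1:ℤ) = y 1 * (m1:ℤ) by linarith)
      · exact mul_right_cancel₀ (show ((m2:ℤ)) ≠ 0 by exact_mod_cast hz)
          (show x 1 * (m2:ℤ) = y 1 * (m2:ℤ) by linarith)
      · exact mul_right_cancel₀ (show ((m3:ℤ)) ≠ 0 by exact_mod_cast hz)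
          (show x 1 * (m3:ℤ) = y 1 * (m3:ℤ) by linarith)
      · exact mul_right_cancel₀ (show ((m4:ℤ)) ≠ 0 by exact_mod_cast hz)
          (show x 1 * (m4:ℤ) = y 1 * (m4:ℤ) by linarith)
      · exact mul_right_cancel₀ (show ((m5:ℤ)) ≠ 0 by exact_mod_cast hz)
          (show x 1 * (m5:ℤ) = y 1 * (m5:ℤ) by linarith)
    have hx0 : x 0 = y 0 := by linear_combination h0 + h6
    funext j
    fin_cases j
    · exact hx0
    · exact hx1
  · rintro y n hn ⟨x, hx⟩
    have f0 := congrFun hx 0; rw [e0] at f0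
    have f1 := congrFun hx 1; rw [e1] at f1
    have f2 := congrFun hx 2; rw [e2] at f2
    have f3 := congrFun hx 3; rw [e3] at f3
    have f4 := congrFun hx 4; rw [e4] at f4
    have f5 := congrFun hx 5; rw [e5] at f5
    have f6 := congrFun hx 6; rw [e6] at f6
    simp only [Pi.smul_apply, smul_eq_mul] at f0 f1 f2 f3 f4 f5 f6
    have d0 : n ∣ x 0 := ⟨y 0 + y 6, by linear_combination f0 + f6⟩
    have d1 : n ∣ x 1 := by
      have g1 : n ∣ (m1 : ℤ) * x 1 := ⟨-y 1, by linear_combination -f1⟩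
      have g2 : n ∣ (m2 : ℤ) * x 1 := ⟨-y 2, by linear_combination -f2⟩
      have g3 : n ∣ (m3 : ℤ) * x 1 := ⟨-y 3, by linear_combination -f3⟩
      have g4 : n ∣ (m4 : ℤ) * x 1 := ⟨-y 4, by linear_combination -f4⟩
      have g5 : n ∣ (m5 : ℤ) * x 1 := ⟨-y 5, by linear_combination -f5⟩
      have := aux_gcd_mul_dvd n (x 1) m1 _ g1
        (aux_gcd_mul_dvd n (x 1) m2 _ g2
          (aux_gcd_mul_dvd n (x 1) m3 _ g3
            (aux_gcd_mul_dvd n (x 1) m4 m5 g4 g5)))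
      rwa [hgcd, Nat.cast_one, one_mul] at this
    obtain ⟨p, hp⟩ := d0
    obtain ⟨q, hq⟩ := d1
    refine ⟨![p, q], ?_⟩
    have k0 : n * σ ![p, q] 0 = n * y 0 := by
      rw [e0]; show n * (p * c + q * m) = _
      rw [← f0, hp, hq]; ring
    have k1 : n * σ ![p, q] 1 = n * y 1 := by
      rw [e1]; show n * (-(q * (m1:ℤ))) = _
      rw [← f1, hq]; ring
    have k2 : n * σ ![p, q] 2 = n * y 2 := by
      rw [e2]; show n * (-(q * (m2:ℤ))) = _
      rw [← f2, hq]; ring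
    have k3 : n * σ ![p, q] 3 = n * y 3 := by
      rw [e3]; show n * (-(q * (m3:ℤ))) = _
      rw [← f3, hq]; ring
    have k4 : n * σ ![p, q] 4 = n * y 4 := by
      rw [e4]; show n * (-(q * (m4:ℤ))) = _
      rw [← f4, hq]; ring
    have k5 : n * σ ![p, q] 5 = n * y 5 := by
      rw [e5]; show n * (-(q * (m5:ℤ))) = _
      rw [← f5, hq]; ring
    have k6 : n * σ ![p, q] 6 = n * y 6 := by
      rw [e6]; show n * (p * (1 - c) - q * m) = _
      rw [← f6, hp, hq]; ring
    funext j
    fin_cases j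
    · exact mul_left_cancel₀ hn k0
    · exact mul_left_cancel₀ hn k1
    · exact mul_left_cancel₀ hn k2
    · exact mul_left_cancel₀ hn k3
    · exact mul_left_cancel₀ hn k4
    · exact mul_left_cancel₀ hn k5
    · exact mul_left_cancel₀ hn k6
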